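/- Every finite game possesses a 0-coarse correlated equilibrium: if K ≥ 1 and each player i has a nonempty finite action set A_i and a cost function C_i : (Π i, A_i) → ℝ, then there exists a probability distribution ψ on the joint action space Π i, A_i such that for every player i and every action a_i' ∈ A_i, E_{a∼ψ}[C_i(a)] ≤ E_{a∼ψ}[C_i(a_i', a_{-i})]. -/

import Mathlib

/-- Every finite game possesses a 0-coarse correlated equilibrium:
there is a probability distribution `ψ` on the joint action space such that no
player can decrease its expected cost by deviating to any pure action. -/
theorem finite_game_has_zero_CCE
    (K : ℕ) (hK : 1 ≤ K)
    (A : Fin K → Type) [∀ i, Fintype (A i)] [∀ i, Nonempty (A i)]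
    [∀ i, DecidableEq (A i)]
    (C : ∀ _ : Fin K, (∀ i, A i) → ℝ) :
    ∃ ψ : (∀ i, A i) → ℝ,
      (∀ a, 0 ≤ ψ a) ∧ (∑ a, ψ a = 1) ∧
      (∀ (i : Fin K) (a' : A i),
        (∑ a, ψ a * C i a) ≤ ∑ a, ψ a * C i (Function.update a i a')) := by
  classical
  -- the "regret vector" of a pure profile
  set v : (∀ i, A i) → ((Σ i : Fin K, A i) → ℝ) := fun a j => C j.1 a - C j.1 (Function.update a j.1 j.2) with hv
  set L : ((∀ i, A i) → ℝ) → ((Σ i : Fin K, A i) → ℝ) := fun ψ => ∑ a, ψ a • v a with hL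
  set S : Set ((Σ i : Fin K, A i) → ℝ) := L '' stdSimplex ℝ (∀ i, A i) with hS
  set T : Set ((Σ i : Fin K, A i) → ℝ) := {y | ∀ j, y j ≤ 0} with hT
  by_cases hST : (S ∩ T).Nonempty
  · obtain ⟨x, ⟨ψ, hψ, rfl⟩, hxT⟩ := hST
    refine ⟨ψ, hψ.1, hψ.2, ?_⟩
    intro i a'
    have hx := hxT ⟨i, a'⟩
    simp only [hL, Finset.sum_apply, Pi.smul_apply, smul_eq_mul, hv] at hx
    have h2 : ∑ a, (ψ a * C i a - ψ a * C i (Function.update a i a')) ≤ 0 := by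
      refine le_trans (le_of_eq ?_) hx
      exact Finset.sum_congr rfl fun a _ => by ring
    rw [Finset.sum_sub_distrib] at h2
    linarith
  · -- separation argument
    exfalso
    have hdisj : Disjoint S T := by
      rw [Set.disjoint_iff_inter_eq_empty]
      exact Set.not_nonempty_iff_eq_empty.mp hST
    have hLlin : IsLinearMap ℝ L := by
      constructor
      · intro x y
        simp only [hL, Pi.add_apply, add_smul, Finset.sum_add_distrib]
      · intro c x
        simp only [hL, Pi.smul_apply, smul_eq_mul, ← smul_smul, ← Finset.smul_sum]
    have hLcont : Continuous L := by
      apply continuous_finset_sum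
      intro a _
      exact ((continuous_apply a).smul continuous_const)
    have hSconv : Convex ℝ S := (convex_stdSimplex ℝ (∀ i, A i)).is_linear_image hLlin
    have hScomp : IsCompact S := (isCompact_stdSimplex ℝ (∀ i, A i)).image hLcont
    have hTconv : Convex ℝ T := by
      intro x hx y hy s t hs ht hst j
      have hx' := hx j
      have hy' := hy j
      have h1 : s * x j ≤ 0 := mul_nonpos_iff.mpr (Or.inl ⟨hs, hx'⟩)
      have h2 : t * y j ≤ 0 := mul_nonpos_iff.mpr (Or.inl ⟨ht, hy'⟩)
      simpa using add_nonpos h1 h2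
    have hTclosed : IsClosed T := by
      have hrw : T = ⋂ j, {y : (Σ i : Fin K, A i) → ℝ | y j ≤ 0} := by
        ext y; simp [hT, Set.mem_iInter]
      rw [hrw]
      exact isClosed_iInter fun j => isClosed_le (continuous_apply j) continuous_const
    obtain ⟨f, u, u', hfS, huu, hfT⟩ :=
      geometric_hahn_banach_compact_closed hSconv hScomp hTconv hTclosed hdisj
    -- `0 ∈ T`, so `u' < 0`, hence `u < 0`.
    have h0T : (0 : (Σ i : Fin K, A i) → ℝ) ∈ T := fun j => le_refl 0
    have hu'0 : u' < 0 := by have := hfT 0 h0T; simpa using this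
    have hu0 : u < 0 := lt_trans huu hu'0
    -- the separating weights
    set ee : (Σ i : Fin K, A i) → ((Σ i : Fin K, A i) → ℝ) := fun j => Pi.single j 1 with hee
    set lam : (Σ i : Fin K, A i) → ℝ := fun j => -(f (ee j)) with hlam
    -- f as a sum against lam
    have hf_repr : ∀ x : (Σ i : Fin K, A i) → ℝ, f x = -∑ j, x j * lam j := by
      intro x
      have hx : x = ∑ j, x j • ee j := by
        ext j'
        simp [hee, Pi.single_apply]
      calc f x = f (∑ j, x j • ee j) := by rw [← hx]
        _ = ∑ j, x j * f (ee j) := by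
            rw [map_sum]
            exact Finset.sum_congr rfl fun j _ => by rw [map_smul, smul_eq_mul]
        _ = -∑ j, x j * lam j := by
            rw [← Finset.sum_neg_distrib]
            refine Finset.sum_congr rfl fun j _ => ?_
            simp only [hlam]; ring
    -- lam is nonnegative
    have hlam_nonneg : ∀ j, 0 ≤ lam j := by
      intro j
      by_contra hcon
      push_neg at hcon
      set t : ℝ := (u' - 1) / lam j with htdef
      have ht : 0 ≤ t := le_of_lt (div_pos_of_neg_of_neg (by linarith) hcon)
      have hmem : (-t) • ee j ∈ T := by
        intro j'
        simp only [Pi.smul_apply, smul_eq_mul]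
        rcases eq_or_ne j' j with rfl | hne
        · simp only [hee, Pi.single_eq_same, mul_one]; linarith
        · simp [hee, Pi.single_eq_of_ne hne]
      have hth := hfT _ hmem
      have hfj : f (ee j) = -lam j := by simp only [hlam]; ring
      rw [map_smul, smul_eq_mul, hfj] at hth
      replace hth : u' < t * lam j := by nlinarith [hth]
      rw [htdef, div_mul_cancel₀ _ (ne_of_lt hcon)] at hth
      linarith
    -- every pure profile is in S via a point mass, so `-u ≤ lam ⬝ v a`
    have hva : ∀ a : (∀ i, A i), -u ≤ ∑ j, v a j * lam j := by
      intro a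
      have hmem : v a ∈ S := by
        refine ⟨fun b => if b = a then 1 else 0, ⟨fun b => by positivity, by simp⟩, ?_⟩
        simp [hL, ite_smul, Finset.sum_ite_eq']
      have hfa := hfS _ hmem
      rw [hf_repr] at hfa
      linarith
    -- build the product distribution from lam
    set Lam : (i : Fin K) → ℝ := fun i => ∑ a' : A i, lam ⟨i, a'⟩ with hLam
    have hLam_nonneg : ∀ i, 0 ≤ Lam i :=
      fun i => Finset.sum_nonneg fun a' _ => hlam_nonneg _
    set q : (i : Fin K) → A i → ℝ := fun i a' =>
      if Lam i = 0 then (Fintype.card (A i) : ℝ)⁻¹ else lam ⟨i, a'⟩ / Lam i with hq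
    have hq_nonneg : ∀ i a', 0 ≤ q i a' := by
      intro i a'
      simp only [hq]
      split
      · positivity
      · exact div_nonneg (hlam_nonneg _) (hLam_nonneg i)
    have hq_sum : ∀ i, ∑ a' : A i, q i a' = 1 := by
      intro i
      simp only [hq]
      by_cases h : Lam i = 0
      · simp only [h, if_true]
        rw [Finset.sum_const, Finset.card_univ, nsmul_eq_mul, mul_inv_cancel₀]
        exact Nat.cast_ne_zero.mpr Fintype.card_ne_zero
      · simp only [h, if_false]
        rw [← Finset.sum_div, show ∑ a' : A i, lam ⟨i, a'⟩ = Lam i from rfl, div_self h]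
    set ψ : (∀ i, A i) → ℝ := fun a => ∏ i, q i (a i) with hψdef
    have hψ_nonneg : ∀ a, 0 ≤ ψ a :=
      fun a => Finset.prod_nonneg fun i _ => hq_nonneg _ _
    have hψ_sum : ∑ a, ψ a = 1 := by
      rw [hψdef, ← Fintype.prod_sum q]
      simp [hq_sum]
    -- key product identity: ψ a * q i a' = ψ (update a i a') * q i (a i)
    have hswap : ∀ (i : Fin K) (a : (∀ i, A i)) (a' : A i),
        ψ a * q i a' = ψ (Function.update a i a') * q i (a i) := by
      intro i a a'
      have h1 : ∀ b : (∀ i, A i), ψ b = q i (b i) * ∏ k ∈ Finset.univ.erase i, q k (b k) :=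
        fun b => (Finset.mul_prod_erase _ _ (Finset.mem_univ i)).symm
      rw [h1 a, h1 (Function.update a i a')]
      have h2 : ∏ k ∈ Finset.univ.erase i, q k (Function.update a i a' k)
          = ∏ k ∈ Finset.univ.erase i, q k (a k) := by
        refine Finset.prod_congr rfl fun k hk => ?_
        rw [Function.update_of_ne (Finset.ne_of_mem_erase hk)]
      rw [h2, Function.update_self]
      ring
    -- deviation expectation identity
    have hkey : ∀ i : Fin K,
        ∑ a' : A i, q i a' * ∑ a, ψ a * C i (Function.update a i a')
          = ∑ a, ψ a * C i a := by
      intro i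
      let e : (∀ i, A i) × A i ≃ (∀ i, A i) × A i :=
        { toFun := fun p => (Function.update p.1 i p.2, p.1 i)
          invFun := fun p => (Function.update p.1 i p.2, p.1 i)
          left_inv := by
            rintro ⟨a, a'⟩
            simp [Function.update_idem]
          right_inv := by
            rintro ⟨a, a'⟩
            simp [Function.update_idem] }
      have hcomp := Equiv.sum_comp e (fun p : (∀ i, A i) × A i => ψ p.1 * q i p.2 * C i p.1)
      simp only [e, Equiv.coe_fn_mk] at hcomp
      calc ∑ a' : A i, q i a' * ∑ a, ψ a * C i (Function.update a i a')
          = ∑ p : (∀ i, A i) × A i, ψ p.1 * q i p.2 * C i (Function.update p.1 i p.2) := by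
            rw [Fintype.sum_prod_type, Finset.sum_comm]
            refine Finset.sum_congr rfl fun a' _ => ?_
            rw [Finset.mul_sum]
            exact Finset.sum_congr rfl fun a _ => by ring
        _ = ∑ p : (∀ i, A i) × A i, ψ (Function.update p.1 i p.2) * q i (p.1 i)
              * C i (Function.update p.1 i p.2) := by
            refine Finset.sum_congr rfl fun p _ => ?_
            rw [← hswap]
        _ = ∑ p : (∀ i, A i) × A i, ψ p.1 * q i p.2 * C i p.1 := hcomp
        _ = ∑ a, ψ a * C i a := by
            rw [Fintype.sum_prod_type]
            refine Finset.sum_congr rfl fun a _ => ?_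
            have hmul : ∑ a' : A i, ψ a * q i a' * C i a
                = (ψ a * C i a) * ∑ a' : A i, q i a' := by
              rw [Finset.mul_sum]
              exact Finset.sum_congr rfl fun a' _ => by ring
            rw [hmul, hq_sum, mul_one]
    -- the expected regret against lam is zero
    have hzero : ∑ j : Σ i : Fin K, A i, lam j * ∑ a, ψ a * v a j = 0 := by
      have hsig : ∑ j : Σ i : Fin K, A i, lam j * ∑ a, ψ a * v a j
          = ∑ i : Fin K, ∑ a' : A i, lam ⟨i, a'⟩ * ∑ a, ψ a * v a ⟨i, a'⟩ := by
        rw [← Finset.univ_sigma_univ, Finset.sum_sigma]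
      rw [hsig]
      refine Finset.sum_eq_zero fun i _ => ?_
      have hv' : ∀ a' : A i, ∑ a, ψ a * v a ⟨i, a'⟩
          = (∑ a, ψ a * C i a) - ∑ a, ψ a * C i (Function.update a i a') := by
        intro a'
        rw [← Finset.sum_sub_distrib]
        refine Finset.sum_congr rfl fun a _ => ?_
        simp only [hv]; ring
      by_cases h : Lam i = 0
      · refine Finset.sum_eq_zero fun a' _ => ?_
        have hl0 : lam ⟨i, a'⟩ = 0 :=
          (Finset.sum_eq_zero_iff_of_nonneg
            (fun b _ => hlam_nonneg ⟨i, b⟩)).mp h a' (Finset.mem_univ _)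
        rw [hl0, zero_mul]
      · have hlq : ∀ a' : A i, lam ⟨i, a'⟩ = Lam i * q i a' := by
          intro a'
          simp only [hq, h, if_false]
          field_simp
        calc ∑ a' : A i, lam ⟨i, a'⟩ * ∑ a, ψ a * v a ⟨i, a'⟩
            = Lam i * ∑ a' : A i, q i a' * ∑ a, ψ a * v a ⟨i, a'⟩ := by
              rw [Finset.mul_sum]
              exact Finset.sum_congr rfl fun a' _ => by rw [hlq]; ring
          _ = 0 := by
              have hinner : ∑ a' : A i, q i a' * ∑ a, ψ a * v a ⟨i, a'⟩ = 0 := by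
                calc ∑ a' : A i, q i a' * ∑ a, ψ a * v a ⟨i, a'⟩
                    = ∑ a' : A i, (q i a' * (∑ a, ψ a * C i a)
                        - q i a' * ∑ a, ψ a * C i (Function.update a i a')) := by
                      exact Finset.sum_congr rfl fun a' _ => by rw [hv']; ring
                  _ = (∑ a' : A i, q i a') * (∑ a, ψ a * C i a)
                        - ∑ a' : A i, q i a' * ∑ a, ψ a * C i (Function.update a i a') := by
                      rw [Finset.sum_sub_distrib, Finset.sum_mul]
                  _ = 0 := by rw [hq_sum, hkey, one_mul, sub_self]
              rw [hinner, mul_zero]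
    -- but the expected regret is at least `-u > 0`: contradiction
    have hlb : -u ≤ ∑ a, ψ a * ∑ j, v a j * lam j := by
      calc -u = (∑ a, ψ a) * (-u) := by rw [hψ_sum, one_mul]
        _ = ∑ a, ψ a * (-u) := by rw [Finset.sum_mul]
        _ ≤ ∑ a, ψ a * ∑ j, v a j * lam j :=
            Finset.sum_le_sum fun a _ => mul_le_mul_of_nonneg_left (hva a) (hψ_nonneg a)
    have hswap2 : ∑ a, ψ a * ∑ j, v a j * lam j = ∑ j : Σ i : Fin K, A i, lam j * ∑ a, ψ a * v a j := by
      simp_rw [Finset.mul_sum]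
      rw [Finset.sum_comm]
      exact Finset.sum_congr rfl fun j _ => Finset.sum_congr rfl fun a _ => by ring
    rw [hswap2, hzero] at hlb
    linarith
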